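/- Let X be a (d+1)-flat CAT(0) cube complex (no hyperplane lies in a (d+1)-corner). Then every hyperplane h of X has at most d predecessors, and every predecessor k of h satisfies d-rank(k) ≥ d-rank(h) − 1. -/

import Mathlib

/-- An abstract model of the hyperplanes of a CAT(0) cube complex with basepoint: each
hyperplane `h` has an outward halfspace `plus h` (the side not containing the basepoint `x0`);
halfspaces are nonempty, determine their hyperplane, and only finitely many hyperplanes
separate the basepoint from any given hyperplane. -/
structure Halfspaces (V H : Type*) where
  plus : H → Set V
  x0 : V
  basepoint : ∀ h, x0 ∉ plus h
  plus_nonempty : ∀ h, (plus h).Nonempty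
  plus_injective : ∀ h k, plus h = plus k → h = k
  lowerFinite : ∀ h, {k | plus h ⊂ plus k}.Finite

namespace Halfspaces

variable {V H : Type*} (M : Halfspaces V H)

/-- `k < h`: the hyperplane `k` separates the basepoint from `h`, i.e. `k⁺ ⊋ h⁺`. -/
def Lt (k h : H) : Prop := M.plus h ⊂ M.plus k

/-- Two hyperplanes are opposite if their outward halfspaces are disjoint. -/
def Opp (h k : H) : Prop := M.plus h ∩ M.plus k = ∅

/-- Two hyperplanes intersect (cross) if all four quadrants are nonempty. -/
def Inter (h k : H) : Prop :=
  (M.plus h ∩ M.plus k).Nonempty ∧ (M.plus h \ M.plus k).Nonempty ∧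
    (M.plus k \ M.plus h).Nonempty ∧ ((M.plus h ∪ M.plus k)ᶜ : Set V).Nonempty

/-- `k` is a predecessor of `h`: `k < h` with nothing strictly between. -/
def Pred (k h : H) : Prop := M.Lt k h ∧ ¬ ∃ j, M.Lt k j ∧ M.Lt j h

/-- `h` is contained in a `d`-corner bounded by hyperplanes of `A`: there are `d` pairwise
intersecting hyperplanes in `A`, each of whose outward halfspaces strictly contains `h⁺`. -/
def InCorner (d : ℕ) (A : Set H) (h : H) : Prop :=
  ∃ S : Finset H, ↑S ⊆ A ∧ S.card = d ∧
    (∀ k ∈ S, ∀ j ∈ S, k ≠ j → M.Inter k j) ∧ ∀ k ∈ S, M.Lt k h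

/-- The iterated sets `H^d_{≥n}` used to define the `d`-rank. -/
def Hlevel (d : ℕ) : ℕ → Set H
  | 0 => Set.univ
  | n + 1 => {h | h ∈ Hlevel d n ∧ M.InCorner d (Hlevel d n) h}

/-- The `d`-rank of `h`: the least `n` such that `h ∉ H^d_{≥ n+1}` (or `⊤` if none). -/
noncomputable def drank (d : ℕ) (h : H) : ℕ∞ :=
  sInf {N : ℕ∞ | ∃ n : ℕ, N = (n : ℕ∞) ∧ h ∉ M.Hlevel d (n + 1)}

end Halfspaces

namespace Halfspaces

variable {V H : Type*} (M : Halfspaces V H)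

lemma inter_symm {h k : H} (hik : M.Inter h k) : M.Inter k h := by
  obtain ⟨a, b, c, e⟩ := hik
  exact ⟨by rwa [Set.inter_comm], c, b, by rwa [Set.union_comm]⟩

/-- Trichotomy: any hyperplane strictly above `h` is equal to a predecessor `k`,
strictly above it, or crosses it. -/
lemma pred_trichotomy {h k j : H} (hk : M.Pred k h) (hj : M.Lt j h) :
    j = k ∨ M.Lt j k ∨ M.Inter j k := by
  by_cases he : M.plus j = M.plus k
  · exact Or.inl (M.plus_injective _ _ he)
  by_cases hjk : M.plus k ⊂ M.plus j
  · exact Or.inr (Or.inl hjk)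
  refine Or.inr (Or.inr ⟨⟨(M.plus_nonempty h).choose,
      hj.1 (M.plus_nonempty h).choose_spec, hk.1.1 (M.plus_nonempty h).choose_spec⟩, ?_, ?_, ?_⟩)
  · rw [Set.diff_nonempty]
    intro hle
    rcases hle.eq_or_ssubset with h1 | h1
    · exact he h1
    · exact hk.2 ⟨j, h1, hj⟩
  · rw [Set.diff_nonempty]
    intro hle
    rcases hle.eq_or_ssubset with h1 | h1
    · exact he h1.symm
    · exact hjk h1
  · exact ⟨M.x0, fun hx => hx.elim (M.basepoint j) (M.basepoint k)⟩

/-- Distinct predecessors of the same hyperplane cross. -/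
lemma pred_inter {h k j : H} (hk : M.Pred k h) (hj : M.Pred j h) (hne : j ≠ k) :
    M.Inter j k := by
  rcases M.pred_trichotomy hk hj.1 with h1 | h1 | h1
  · exact absurd h1 hne
  · exact absurd ⟨k, h1, hk.1⟩ hj.2
  · exact h1

/-- The key inductive claim: in a `(d+1)`-flat complex, if `h ∈ Hlevel d (n+1)` then any
predecessor `k` of `h` satisfies `k ∈ Hlevel d n`. -/
lemma pred_hlevel {d : ℕ} (hflat : ∀ h : H, ¬ M.InCorner (d + 1) Set.univ h) :
    ∀ n : ℕ, ∀ h k : H, M.Pred k h → h ∈ M.Hlevel d (n + 1) → k ∈ M.Hlevel d n := by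
  classical
  intro n
  induction n with
  | zero => intro h k _ _; exact Set.mem_univ k
  | succ n ih =>
    intro h k hpred hh
    obtain ⟨hh1, S, hSsub, hScard, hSinter, hSlt⟩ := hh
    have hk1 : k ∈ M.Hlevel d n := ih h k hpred hh1
    refine ⟨hk1, ?_⟩
    by_cases hkS : k ∈ S
    · exact (hSsub hkS).2
    by_cases hA : ∃ a ∈ S, M.Lt a k
    · obtain ⟨a, haS, hak⟩ := hA
      obtain ⟨_, T, hTsub, hTcard, hTinter, hTlt⟩ := hSsub haS
      exact ⟨T, hTsub, hTcard, hTinter, fun t ht => hak.trans (hTlt t ht)⟩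
    · push_neg at hA
      exfalso
      apply hflat h
      refine ⟨insert k S, Set.subset_univ _, ?_, ?_, ?_⟩
      · rw [Finset.card_insert_of_notMem hkS, hScard]
      · intro x hx y hy hxy
        rcases Finset.mem_insert.1 hx with rfl | hxS
        · rcases Finset.mem_insert.1 hy with rfl | hyS
          · exact absurd rfl hxy
          · have := M.pred_trichotomy hpred (hSlt y hyS)
            rcases this with h1 | h1 | h1
            · exact absurd (h1 ▸ hyS) hkS
            · exact absurd h1 (hA y hyS)
            · exact M.inter_symm h1
        · rcases Finset.mem_insert.1 hy with rfl | hyS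
          · rcases M.pred_trichotomy hpred (hSlt x hxS) with h1 | h1 | h1
            · exact absurd (h1 ▸ hxS) hkS
            · exact absurd h1 (hA x hxS)
            · exact h1
          · exact hSinter x hxS y hyS hxy
      · intro x hx
        rcases Finset.mem_insert.1 hx with rfl | hxS
        · exact hpred.1
        · exact hSlt x hxS

end Halfspaces

/-- If `X` is `(d+1)`-flat (no hyperplane lies in a `(d+1)`-corner), then every hyperplane has
at most `d` predecessors, and every predecessor `k` of `h` satisfies
`d-rank(k) ≥ d-rank(h) - 1`. -/
theorem stmt9 {V H : Type*} (M : Halfspaces V H) (d : ℕ)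
    (hflat : ∀ h : H, ¬ M.InCorner (d + 1) Set.univ h) (h : H) :
    (∀ S : Finset H, (∀ k ∈ S, M.Pred k h) → S.card ≤ d) ∧
    (∀ k, M.Pred k h → M.drank d h ≤ M.drank d k + 1) := by
  classical
  constructor
  · intro S hS
    by_contra hcard
    push_neg at hcard
    obtain ⟨T, hTsub, hTcard⟩ := Finset.exists_subset_card_eq hcard
    apply hflat h
    refine ⟨T, Set.subset_univ _, hTcard, ?_, ?_⟩
    · intro x hx y hy hxy
      exact M.pred_inter (hS y (hTsub hy)) (hS x (hTsub hx)) hxy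
    · intro x hx
      exact (hS x (hTsub hx)).1
  · intro k hkpred
    by_cases hK : ∃ n : ℕ, k ∉ M.Hlevel d (n + 1)
    · set n₀ := Nat.find hK with hn₀
      have hspec : k ∉ M.Hlevel d (n₀ + 1) := Nat.find_spec hK
      have hdk : M.drank d k = (n₀ : ℕ∞) := by
        apply le_antisymm
        · exact sInf_le ⟨n₀, rfl, hspec⟩
        · apply le_sInf
          rintro N ⟨m, rfl, hm⟩
          exact_mod_cast Nat.find_min' hK hm
      have hh : h ∉ M.Hlevel d (n₀ + 1 + 1) := fun hmem =>
        hspec (M.pred_hlevel hflat (n₀ + 1) h k hkpred hmem)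
      have : M.drank d h ≤ ((n₀ + 1 : ℕ) : ℕ∞) := sInf_le ⟨n₀ + 1, rfl, hh⟩
      rw [hdk]
      refine this.trans (le_of_eq ?_)
      push_cast
      rfl
    · push_neg at hK
      have : {N : ℕ∞ | ∃ n : ℕ, N = (n : ℕ∞) ∧ k ∉ M.Hlevel d (n + 1)} = ∅ := by
        ext N
        simp only [Set.mem_setOf_eq, Set.mem_empty_iff_false, iff_false, not_exists]
        rintro n ⟨rfl, hn⟩
        exact hn (hK n)
      have hdk : M.drank d k = ⊤ := by
        unfold Halfspaces.drank
        rw [this, sInf_empty]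
      rw [hdk]
      simp
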